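/- For every x > 1, ∂τ/∂t(x, x) < 0, where τ(x,t) = (1/x)(t - (t+x+1)(t/(1+t))^{x+1}); equivalently, (1/x)·(1 - (3 + 1/x)·(x/(1+x))^{x+1}) < 0 for all x > 1. -/

import Mathlib

lemma logbound {u : ℝ} (hu : 0 < u) (hu3 : u < 3) : Real.log (1+u) < 3*u/(3+u) := by
  set g : ℝ → ℝ := fun u => 3*u/(3+u) - Real.log (1+u) with hg
  have key : StrictMonoOn g (Set.Icc 0 3) := by
    apply strictMonoOn_of_deriv_pos (convex_Icc 0 3)
    · apply ContinuousOn.sub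
      · apply ContinuousOn.div (by fun_prop) (by fun_prop)
        intro y hy; simp at hy; intro h; linarith [hy.1]
      · apply ContinuousOn.log (by fun_prop)
        intro y hy; simp at hy; intro h; linarith [hy.1]
    · intro y hy
      rw [interior_Icc] at hy
      obtain ⟨hy0, hy3⟩ := hy
      have h1 : HasDerivAt (fun u : ℝ => 3*u/(3+u)) (9/(3+y)^2) y := by
        have := ((hasDerivAt_id y).const_mul (3:ℝ)).div
          ((hasDerivAt_const y (3:ℝ)).add (hasDerivAt_id y)) (by intro h; simp at h; linarith)
        refine this.congr_deriv ?_
        simp only [Pi.add_apply, id_eq]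
        field_simp
        ring
      have h2 : HasDerivAt (fun u : ℝ => Real.log (1+u)) (1/(1+y)) y := by
        have := (Real.hasDerivAt_log (by positivity : (1:ℝ)+y ≠ 0)).comp y
          ((hasDerivAt_const y (1:ℝ)).add (hasDerivAt_id y))
        refine this.congr_deriv ?_
        simp
      have : HasDerivAt g (9/(3+y)^2 - 1/(1+y)) y := h1.sub h2
      rw [this.deriv]
      rw [div_sub_div _ _ (by positivity) (by positivity), lt_div_iff₀ (by positivity)]
      nlinarith
  have := key (Set.mem_Icc.2 ⟨le_refl 0, by norm_num⟩) (Set.mem_Icc.2 ⟨hu.le, hu3.le⟩) hu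
  simp [hg] at this
  linarith



noncomputable def tau (x t : ℝ) : ℝ := (1/x) * (t - (t + x + 1) * (t/(1+t)) ^ (x+1))

theorem deriv_part (x : ℝ) (hx : 1 < x) :
    deriv (fun t => tau x t) x = (1/x) * (1 - (3 + 1/x) * (x/(1+x)) ^ (x+1)) := by
  have hx0 : (0:ℝ) < x := by linarith
  have hx1 : (0:ℝ) < 1 + x := by linarith
  have hq : (0:ℝ) < x / (1+x) := by positivity
  have h1 : HasDerivAt (fun t : ℝ => t/(1+t)) (1/(1+x)^2) x := by
    have := (hasDerivAt_id x).div ((hasDerivAt_const x (1:ℝ)).add (hasDerivAt_id x)) (ne_of_gt hx1)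
    refine this.congr_deriv ?_
    simp only [Pi.add_apply, id_eq]
    all_goals (try field_simp) <;> try ring
  have h2 : HasDerivAt (fun t : ℝ => (t/(1+t)) ^ (x+1))
      (1/(1+x)^2 * (x+1) * (x/(1+x)) ^ (x+1-1)) x :=
    h1.rpow_const (Or.inl (ne_of_gt hq))
  have h3 : HasDerivAt (fun t : ℝ => (t + x + 1) * (t/(1+t)) ^ (x+1))
      (1 * (x/(1+x)) ^ (x+1) + (x + x + 1) * (1/(1+x)^2 * (x+1) * (x/(1+x)) ^ (x+1-1))) x := by
    have ha : HasDerivAt (fun t : ℝ => t + x + 1) 1 x :=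
      ((hasDerivAt_id x).add_const x).add_const 1
    exact ha.mul h2
  have h4 : HasDerivAt (fun t => tau x t)
      ((1/x) * (1 - (1 * (x/(1+x)) ^ (x+1) + (x + x + 1) * (1/(1+x)^2 * (x+1) * (x/(1+x)) ^ (x+1-1))))) x := by
    unfold tau
    exact (((hasDerivAt_id x).sub h3).const_mul (1/x))
  rw [h4.deriv]
  have hB : (x/(1+x)) ^ (x+1) = (x/(1+x)) ^ (x+1-1) * (x/(1+x)) := by
    rw [show x+1-1 = x by ring]
    rw [← Real.rpow_add_one (ne_of_gt hq) x]
  rw [hB]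
  field_simp
  ring

noncomputable def F (x : ℝ) : ℝ := Real.log (3 + x⁻¹) - (x+1) * Real.log (1 + x⁻¹)

lemma Fpos {x : ℝ} (hx : 1 < x) : 0 < F x := by
  have key : StrictMonoOn F (Set.Ici 1) := by
    apply strictMonoOn_of_deriv_pos (convex_Ici 1)
    · apply ContinuousOn.sub
      · apply ContinuousOn.log
        · exact continuousOn_const.add (continuousOn_inv₀.mono (by intro y hy; simp at hy ⊢; positivity))
        · intro y hy
          simp at hy
          have : (0:ℝ) < y⁻¹ := by positivity
          positivity
      · apply ContinuousOn.mul (by fun_prop)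
        apply ContinuousOn.log
        · exact continuousOn_const.add (continuousOn_inv₀.mono (by intro y hy; simp at hy ⊢; positivity))
        · intro y hy
          simp at hy
          have : (0:ℝ) < y⁻¹ := by positivity
          positivity
    · intro y hy
      rw [interior_Ici] at hy
      have hy1 : (1:ℝ) < y := hy
      have hy0 : (0:ℝ) < y := by linarith
      have hyi : (0:ℝ) < y⁻¹ := by positivity
      have h3y : (0:ℝ) < 3 + y⁻¹ := by positivity
      have h1y : (0:ℝ) < 1 + y⁻¹ := by positivity
      have hinv : HasDerivAt (fun x : ℝ => x⁻¹) (-(y^2)⁻¹) y := hasDerivAt_inv (ne_of_gt hy0)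
      have hA : HasDerivAt (fun x : ℝ => Real.log (3 + x⁻¹)) ((-(y^2)⁻¹) / (3 + y⁻¹)) y := by
        have := (Real.hasDerivAt_log (ne_of_gt h3y)).comp y ((hasDerivAt_const y (3:ℝ)).add hinv)
        refine this.congr_deriv ?_
        field_simp
        ring
      have hB : HasDerivAt (fun x : ℝ => Real.log (1 + x⁻¹)) ((-(y^2)⁻¹) / (1 + y⁻¹)) y := by
        have := (Real.hasDerivAt_log (ne_of_gt h1y)).comp y ((hasDerivAt_const y (1:ℝ)).add hinv)
        refine this.congr_deriv ?_
        field_simp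
        ring
      have hC : HasDerivAt (fun x : ℝ => (x+1) * Real.log (1 + x⁻¹))
          (1 * Real.log (1 + y⁻¹) + (y+1) * ((-(y^2)⁻¹) / (1 + y⁻¹))) y :=
        (((hasDerivAt_id y).add_const (1:ℝ)).mul hB)
      have hF : HasDerivAt F ((-(y^2)⁻¹) / (3 + y⁻¹) - (1 * Real.log (1 + y⁻¹) + (y+1) * ((-(y^2)⁻¹) / (1 + y⁻¹)))) y :=
        hA.sub hC
      rw [hF.deriv]
      have hyy : y * y⁻¹ = 1 := mul_inv_cancel₀ (ne_of_gt hy0)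
      have hi1 : y⁻¹ < 1 := by nlinarith
      have hlb := logbound hyi (by linarith)
      have heq : 3*y⁻¹/(3+y⁻¹) = 3/(3*y+1) := by
        rw [div_eq_div_iff (by positivity) (by positivity)]
        field_simp
      have hexpr : (-(y^2)⁻¹) / (3 + y⁻¹) - (1 * Real.log (1 + y⁻¹) + (y+1) * ((-(y^2)⁻¹) / (1 + y⁻¹)))
          = 3/(3*y+1) - Real.log (1 + y⁻¹) := by
        field_simp
        ring
      rw [hexpr]
      rw [heq] at hlb
      linarith
  have h1 : F 1 = 0 := by
    simp only [F, inv_one]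
    rw [show (3:ℝ)+1 = 2^2 by norm_num, show (1:ℝ)+1 = 2 by norm_num, Real.log_pow]
    push_cast
    ring
  have h2 := key (Set.mem_Ici.2 le_rfl) (Set.mem_Ici.2 hx.le) hx
  rw [h1] at h2
  exact h2

theorem stmt3 : ∀ x : ℝ, 1 < x →
    deriv (fun t => tau x t) x = (1/x) * (1 - (3 + 1/x) * (x/(1+x)) ^ (x+1)) ∧
    (1/x) * (1 - (3 + 1/x) * (x/(1+x)) ^ (x+1)) < 0 := by
  intro x hx
  have hx0 : (0:ℝ) < x := lt_trans one_pos hx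
  refine ⟨deriv_part x hx, ?_⟩
  have hF := Fpos hx
  have hb : (0:ℝ) < 1 + x⁻¹ := by positivity
  have h3 : (0:ℝ) < 3 + x⁻¹ := by positivity
  have hlog : (x+1) * Real.log (1 + x⁻¹) < Real.log (3 + x⁻¹) := by
    unfold F at hF; linarith
  rw [← Real.log_rpow hb] at hlog
  have hPpos : (0:ℝ) < (1 + x⁻¹) ^ (x+1) := Real.rpow_pos_of_pos hb _
  have hlt : (1 + x⁻¹) ^ (x+1) < 3 + x⁻¹ := (Real.log_lt_log_iff hPpos h3).1 hlog
  have hinvbase : x/(1+x) = (1 + x⁻¹)⁻¹ := by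
    have h1x : (0:ℝ) < 1 + x := by linarith
    rw [eq_comm, inv_eq_iff_eq_inv, eq_comm, inv_div]
    field_simp
    ring

  have hq : (x/(1+x)) ^ (x+1) = ((1 + x⁻¹) ^ (x+1))⁻¹ := by
    rw [hinvbase, Real.inv_rpow hb.le]
  have hgt1 : 1 < (3 + 1/x) * (x/(1+x)) ^ (x+1) := by
    rw [hq, one_div, ← div_eq_mul_inv, lt_div_iff₀ hPpos, one_mul]
    exact hlt
  have hneg : 1 - (3 + 1/x) * (x/(1+x)) ^ (x+1) < 0 := by linarith
  exact mul_neg_of_pos_of_neg (by positivity) hneg
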